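/- Let G be a finite bipartite graph with parts A and B, and let D be the network obtained by directing all edges from A to B with infinite capacity, adding a source s with edges (s,u) of capacity α for each u ∈ A, and a sink t with edges (v,t) of capacity β for each v ∈ B, where α, β are positive integers. Then there exists a nonempty subset X ⊆ A with |X|/|N(X)| > β/α (where N(X) is the neighborhood of X in G, and the ratio is interpreted as ∞ if N(X) = ∅ and X ≠ ∅) if and only if the minimum capacity of an s–t cut in D is strictly less than α·|A|. -/
import Mathlib


open Finset

variable {V : Type*} [Fintype V] [DecidableEq V]

/-- The capacity function of the network `D` built from a bipartite graph `G` with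
parts `A`, `B`: a source (`Sum.inl ()`) sends capacity-`α` edges to `A`, the edges of
`G` are directed from `A` to `B` with infinite capacity, and `B` sends capacity-`β`
edges to the sink (`Sum.inr (Sum.inr ())`). -/
noncomputable def netCap (G : SimpleGraph V) [DecidableRel G.Adj] (A B : Finset V) (α β : ℕ) :
    (Unit ⊕ V ⊕ Unit) → (Unit ⊕ V ⊕ Unit) → ENNReal
  | Sum.inl _, Sum.inr (Sum.inl v) => if v ∈ A then (α : ENNReal) else 0
  | Sum.inr (Sum.inl u), Sum.inr (Sum.inl v) =>
      if G.Adj u v ∧ u ∈ A ∧ v ∈ B then ⊤ else 0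
  | Sum.inr (Sum.inl v), Sum.inr (Sum.inr _) => if v ∈ B then (β : ENNReal) else 0
  | _, _ => 0

/-- The capacity of the cut determined by a set `S` of vertices of the network. -/
noncomputable def cutCap (G : SimpleGraph V) [DecidableRel G.Adj]
    (A B : Finset V) (α β : ℕ) (S : Finset (Unit ⊕ V ⊕ Unit)) : ENNReal :=
  ∑ p, ∑ q, if p ∈ S ∧ q ∉ S then netCap G A B α β p q else 0

lemma aux1 (A : Finset V) (α : ℕ) (P : V → Prop) [DecidablePred P] :
    (∑ x : V, if P x then (if x ∈ A then (α:ENNReal) else 0) else 0)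
      = (α:ENNReal) * (A.filter P).card := by
  rw [← Finset.sum_filter, Finset.sum_ite_mem, Finset.sum_const, nsmul_eq_mul, mul_comm]
  congr 3
  ext x; simp [and_comm]

set_option linter.unnecessarySeqFocus false in
lemma aux2 (G : SimpleGraph V) [DecidableRel G.Adj] (A B : Finset V)
    (p q : V → Prop) [DecidablePred p] [DecidablePred q] :
    (∑ x : V, ∑ y : V, if p x ∧ q y then (if G.Adj x y ∧ x ∈ A ∧ y ∈ B then (⊤:ENNReal) else 0) else 0)
      = ∑ u ∈ A.filter p, ∑ v ∈ B.filter q, (if G.Adj u v then (⊤:ENNReal) else 0) := by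
  have hA : A.filter p = univ.filter (fun x => x ∈ A ∧ p x) := by ext; simp
  have hB : B.filter q = univ.filter (fun x => x ∈ B ∧ q x) := by ext; simp
  rw [hA, Finset.sum_filter]
  refine Finset.sum_congr rfl fun x _ => ?_
  rw [hB, Finset.sum_filter]
  by_cases hpx : p x <;> by_cases hxA : x ∈ A <;> simp [hpx, hxA] <;>
    refine Finset.sum_congr rfl fun y _ => ?_ <;>
    by_cases hqy : q y <;> by_cases hyB : y ∈ B <;> simp [hqy, hyB]

lemma cutCap_formula (G : SimpleGraph V) [DecidableRel G.Adj] (A B : Finset V) (α β : ℕ)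
    (S : Finset (Unit ⊕ V ⊕ Unit)) (hs : Sum.inl () ∈ S) (ht : Sum.inr (Sum.inr ()) ∉ S) :
    cutCap G A B α β S =
      (α : ENNReal) * (A.filter (fun v => Sum.inr (Sum.inl v) ∉ S)).card
      + (β : ENNReal) * (B.filter (fun v => Sum.inr (Sum.inl v) ∈ S)).card
      + ∑ u ∈ A.filter (fun v => Sum.inr (Sum.inl v) ∈ S),
          ∑ v ∈ B.filter (fun v => Sum.inr (Sum.inl v) ∉ S),
            (if G.Adj u v then (⊤ : ENNReal) else 0) := by
  unfold cutCap
  rw [Fintype.sum_sum_type]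
  simp only [Fintype.sum_sum_type, netCap, Finset.univ_unique, Finset.sum_singleton, hs, ht,
    true_and, if_false, if_true, not_false_eq_true, and_true, Finset.sum_const_zero, add_zero,
    zero_add, ite_self]
  rw [Finset.sum_add_distrib, aux1 A α (fun v => Sum.inr (Sum.inl v) ∉ S),
    aux1 B β (fun v => Sum.inr (Sum.inl v) ∈ S),
    aux2 G A B (fun v => Sum.inr (Sum.inl v) ∈ S) (fun v => Sum.inr (Sum.inl v) ∉ S)]
  ring

/-- There is a nonempty `X ⊆ A` with `|X|/|N(X)| > β/α` iff the minimum capacity of an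
`s`–`t` cut in the network `D` is strictly less than `α·|A|`. -/
theorem ratio_iff_mincut_lt (G : SimpleGraph V) [DecidableRel G.Adj]
    (A B : Finset V) (hdisj : Disjoint A B) (hcover : A ∪ B = Finset.univ)
    (hbip : ∀ u v : V, G.Adj u v → (u ∈ A ∧ v ∈ B) ∨ (u ∈ B ∧ v ∈ A))
    (α β : ℕ) (hα : 0 < α) (hβ : 0 < β) :
    (∃ X : Finset V, X ⊆ A ∧ X.Nonempty ∧
        β * (B.filter (fun v => ∃ u ∈ X, G.Adj u v)).card < α * X.card) ↔
      sInf {c : ENNReal | ∃ S : Finset (Unit ⊕ V ⊕ Unit),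
          Sum.inl () ∈ S ∧ Sum.inr (Sum.inr ()) ∉ S ∧ c = cutCap G A B α β S} <
        (α : ENNReal) * (A.card : ENNReal) := by
  constructor
  · rintro ⟨X, hXA, hXne, hlt⟩
    set N : Finset V := B.filter (fun v => ∃ u ∈ X, G.Adj u v) with hN
    set S : Finset (Unit ⊕ V ⊕ Unit) :=
      {Sum.inl ()} ∪ (X ∪ N).image (fun v => Sum.inr (Sum.inl v)) with hSdef
    have hmem : ∀ v : V, Sum.inr (Sum.inl v) ∈ S ↔ v ∈ X ∪ N := by
      intro v; simp [hSdef]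
    have hs : Sum.inl () ∈ S := by simp [hSdef]
    have ht : Sum.inr (Sum.inr ()) ∉ S := by simp [hSdef]
    have hfA : A.filter (fun v => Sum.inr (Sum.inl v) ∉ S) = A \ X := by
      ext v
      simp only [Finset.mem_filter, hmem, Finset.mem_union, Finset.mem_sdiff, not_or]
      constructor
      · rintro ⟨hvA, hvX, _⟩; exact ⟨hvA, hvX⟩
      · rintro ⟨hvA, hvX⟩
        exact ⟨hvA, hvX, fun hvN => Finset.disjoint_left.mp hdisj hvA (Finset.filter_subset _ _ hvN)⟩
    have hfA' : A.filter (fun v => Sum.inr (Sum.inl v) ∈ S) = X := by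
      ext v
      simp only [Finset.mem_filter, hmem, Finset.mem_union]
      constructor
      · rintro ⟨hvA, hvX | hvN⟩
        · exact hvX
        · exact absurd (Finset.filter_subset _ _ hvN)
            (Finset.disjoint_left.mp hdisj hvA)
      · intro hv; exact ⟨hXA hv, Or.inl hv⟩
    have hfB : B.filter (fun v => Sum.inr (Sum.inl v) ∈ S) = N := by
      ext v
      simp only [Finset.mem_filter, hmem, Finset.mem_union]
      constructor
      · rintro ⟨hvB, hvX | hvN⟩
        · exact absurd hvB (Finset.disjoint_left.mp hdisj (hXA hvX))
        · exact hvN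
      · intro hv; exact ⟨Finset.mem_filter.mp hv |>.1, Or.inr hv⟩
    have htopsum : (∑ u ∈ A.filter (fun v => Sum.inr (Sum.inl v) ∈ S),
        ∑ v ∈ B.filter (fun v => Sum.inr (Sum.inl v) ∉ S),
          (if G.Adj u v then (⊤ : ENNReal) else 0)) = 0 := by
      rw [hfA']
      refine Finset.sum_eq_zero fun u hu => Finset.sum_eq_zero fun v hv => ?_
      rw [Finset.mem_filter] at hv
      rw [if_neg]
      intro hadj
      exact hv.2 ((hmem v).mpr (Finset.mem_union_right _
        (Finset.mem_filter.mpr ⟨hv.1, u, hu, hadj⟩)))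
    have hcut : cutCap G A B α β S
        = (α : ENNReal) * ((A.card - X.card : ℕ) : ENNReal) + (β : ENNReal) * N.card := by
      rw [cutCap_formula G A B α β S hs ht, hfA, hfB, htopsum, add_zero,
        Finset.card_sdiff_of_subset hXA]
    have hnat : α * (A.card - X.card) + β * N.card < α * A.card := by
      have hxa : X.card ≤ A.card := Finset.card_le_card hXA
      calc α * (A.card - X.card) + β * N.card
          < α * (A.card - X.card) + α * X.card := by omega
        _ = α * A.card := by rw [← Nat.mul_add]; congr 1; omega
    refine lt_of_le_of_lt (sInf_le ⟨S, hs, ht, rfl⟩) ?_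
    rw [hcut]
    have := (Nat.cast_lt (α := ENNReal)).mpr hnat
    push_cast at this ⊢
    exact this
  · intro h
    rw [sInf_lt_iff] at h
    obtain ⟨c, ⟨S, hs, ht, rfl⟩, hlt⟩ := h
    rw [cutCap_formula G A B α β S hs ht] at hlt
    set X : Finset V := A.filter (fun v => Sum.inr (Sum.inl v) ∈ S) with hXdef
    set Y : Finset V := B.filter (fun v => Sum.inr (Sum.inl v) ∉ S) with hYdef
    have hne_top : (α : ENNReal) * (A.card : ENNReal) ≠ ⊤ :=
      ENNReal.mul_ne_top (ENNReal.natCast_ne_top α) (ENNReal.natCast_ne_top A.card)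
    have htop : ∀ u ∈ X, ∀ v ∈ Y, ¬ G.Adj u v := by
      intro u hu v hv hadj
      have htopEq : (∑ u ∈ X, ∑ v ∈ Y, (if G.Adj u v then (⊤ : ENNReal) else 0)) = ⊤ := by
        rw [ENNReal.sum_eq_top]
        exact ⟨u, hu, by rw [ENNReal.sum_eq_top]; exact ⟨v, hv, by rw [if_pos hadj]⟩⟩
      rw [htopEq, add_top] at hlt
      exact not_top_lt hlt
    have htopsum : (∑ u ∈ X, ∑ v ∈ Y, (if G.Adj u v then (⊤ : ENNReal) else 0)) = 0 :=
      Finset.sum_eq_zero fun u hu => Finset.sum_eq_zero fun v hv =>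
        if_neg (htop u hu v hv)
    rw [htopsum, add_zero] at hlt
    set N : Finset V := B.filter (fun v => ∃ u ∈ X, G.Adj u v) with hNdef
    have hNsub : N ⊆ B.filter (fun v => Sum.inr (Sum.inl v) ∈ S) := by
      intro v hv
      rw [hNdef, Finset.mem_filter] at hv
      obtain ⟨hvB, u, hu, hadj⟩ := hv
      rw [Finset.mem_filter]
      refine ⟨hvB, ?_⟩
      by_contra hvS
      exact htop u hu v (Finset.mem_filter.mpr ⟨hvB, hvS⟩) hadj
    have hcard : (A.filter (fun v => Sum.inr (Sum.inl v) ∉ S)).card + X.card = A.card := by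
      rw [hXdef, add_comm]
      exact Finset.card_filter_add_card_filter_not _
    -- get the nat inequality
    have hle : (α : ENNReal) * ((A.filter (fun v => Sum.inr (Sum.inl v) ∉ S)).card)
        + (β : ENNReal) * N.card < (α : ENNReal) * A.card := by
      refine lt_of_le_of_lt ?_ hlt
      exact add_le_add le_rfl
        (mul_le_mul_right (Nat.cast_le.mpr (Finset.card_le_card hNsub)) _)
    have hnat : α * (A.filter (fun v => Sum.inr (Sum.inl v) ∉ S)).card + β * N.card
        < α * A.card := by
      have := hle
      rw [← Nat.cast_mul, ← Nat.cast_mul, ← Nat.cast_mul, ← Nat.cast_add,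
        Nat.cast_lt] at this
      exact this
    have hmul : α * A.card = α * (A.filter (fun v => Sum.inr (Sum.inl v) ∉ S)).card
        + α * X.card := by rw [← hcard, Nat.mul_add]
    have hkey : β * N.card < α * X.card := by omega
    have hxpos : 0 < X.card := by
      rcases Nat.eq_zero_or_pos X.card with h0 | h
      · rw [h0, Nat.mul_zero] at hkey; omega
      · exact h
    exact ⟨X, Finset.filter_subset _ _, Finset.card_pos.mp hxpos, hkey⟩
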